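/- Let M be the rotation of ℝ² by the angle 2π/3, i.e., the matrix [[−1/2, −√3/2],[√3/2, −1/2]]. Let f : ℝ² → ℝ be twice differentiable at 0 and satisfy f(Mx) = f(x) for all x ∈ ℝ². Then the derivative of f at 0 is zero, and there exists a ∈ ℝ such that f(x) = f(0) + a·‖x‖² + o(‖x‖²) as x → 0 (equivalently, the second derivative of f at 0 is a scalar multiple of the identity quadratic form). -/

import Mathlib

open Asymptotics

/-- Rotation of the Euclidean plane by the angle `2π/3`. -/
noncomputable def rot : EuclideanSpace ℝ (Fin 2) → EuclideanSpace ℝ (Fin 2) :=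
  fun x => (WithLp.equiv 2 (Fin 2 → ℝ)).symm
    ![(-1 / 2) * x 0 - (Real.sqrt 3 / 2) * x 1,
      (Real.sqrt 3 / 2) * x 0 - (1 / 2) * x 1]

noncomputable def rotCLM : EuclideanSpace ℝ (Fin 2) →L[ℝ] EuclideanSpace ℝ (Fin 2) :=
  LinearMap.toContinuousLinearMap
  { toFun := rot
    map_add' := by
      intro x y
      ext i
      fin_cases i <;>
        simp [rot] <;> ring
    map_smul' := by
      intro c x
      ext i
      fin_cases i <;>
        simp [rot, smul_eq_mul] <;> ring }

lemma rotCLM_apply (x : EuclideanSpace ℝ (Fin 2)) : rotCLM x = rot x := rfl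

lemma rot_sum (x : EuclideanSpace ℝ (Fin 2)) : x + rotCLM x + rotCLM (rotCLM x) = 0 := by
  have h3 : Real.sqrt 3 * Real.sqrt 3 = 3 := Real.mul_self_sqrt (by norm_num)
  ext i
  fin_cases i <;> simp only [rotCLM_apply, rot]
  · simp
    linear_combination (- x 0 / 4) * h3
  · simp
    linear_combination (- x 1 / 4) * h3

noncomputable def e1 : EuclideanSpace ℝ (Fin 2) := EuclideanSpace.single 0 1
noncomputable def e2 : EuclideanSpace ℝ (Fin 2) := EuclideanSpace.single 1 1

lemma decomp (x : EuclideanSpace ℝ (Fin 2)) : x = x 0 • e1 + x 1 • e2 := by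
  ext i
  fin_cases i <;> simp [e1, e2, EuclideanSpace.single_apply]

lemma rot_e1 : rotCLM e1 = (-1/2 : ℝ) • e1 + (Real.sqrt 3 / 2) • e2 := by
  ext i
  fin_cases i <;> simp [rotCLM_apply, rot, e1, e2, EuclideanSpace.single_apply]

lemma rot_e2 : rotCLM e2 = (-(Real.sqrt 3) / 2 : ℝ) • e1 + (-1/2 : ℝ) • e2 := by
  ext i
  fin_cases i <;> simp [rotCLM_apply, rot, e1, e2, EuclideanSpace.single_apply] <;> ring

lemma norm_sq (x : EuclideanSpace ℝ (Fin 2)) : ‖x‖ ^ 2 = x 0 ^ 2 + x 1 ^ 2 := by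
  rw [EuclideanSpace.norm_eq, Real.sq_sqrt (by positivity)]
  simp [Fin.sum_univ_two, sq_abs]

set_option maxHeartbeats 1000000 in
/-- A function invariant under rotation by `2π/3` which is twice differentiable at `0`
has vanishing derivative there and an isotropic quadratic Taylor term:
`f(x) = f(0) + a‖x‖² + o(‖x‖²)`. -/
theorem stmt6 (f : EuclideanSpace ℝ (Fin 2) → ℝ)
    (hf1 : ∀ᶠ x in nhds (0 : EuclideanSpace ℝ (Fin 2)), DifferentiableAt ℝ f x)
    (hf2 : DifferentiableAt ℝ (fderiv ℝ f) 0)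
    (hinv : ∀ x, f (rot x) = f x) :
    fderiv ℝ f 0 = 0 ∧
    ∃ a : ℝ, (fun x : EuclideanSpace ℝ (Fin 2) => f x - f 0 - a * ‖x‖ ^ 2)
      =o[nhds (0 : EuclideanSpace ℝ (Fin 2))] (fun x => ‖x‖ ^ 2) := by
  set g := fderiv ℝ f with hgdef
  -- chain rule: g x = (g (rot x)).comp rotCLM near 0
  have hcont : Filter.Tendsto rotCLM (nhds (0 : EuclideanSpace ℝ (Fin 2))) (nhds 0) := by
    simpa using rotCLM.continuous.tendsto 0
  have hdr : ∀ᶠ x in nhds (0 : EuclideanSpace ℝ (Fin 2)),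
      DifferentiableAt ℝ f (rotCLM x) := hcont.eventually hf1
  have hchain : (fun x => g x) =ᶠ[nhds (0 : EuclideanSpace ℝ (Fin 2))]
      (fun x => (g (rotCLM x)).comp rotCLM) := by
    filter_upwards [hdr] with x hx
    have h1 : HasFDerivAt (fun y => f (rotCLM y)) ((g (rotCLM x)).comp rotCLM) x :=
      hx.hasFDerivAt.comp x rotCLM.hasFDerivAt
    have h2 : (fun y => f (rotCLM y)) = f := by
      funext y; rw [rotCLM_apply]; exact hinv y
    rw [h2] at h1
    exact h1.fderiv
  -- first derivative vanishes
  have hg0 : g 0 = 0 := by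
    have h0 : g 0 = (g 0).comp rotCLM := by
      have := hchain.self_of_nhds
      simpa [map_zero] using this
    have key : ∀ v, g 0 v = g 0 (rotCLM v) := by
      intro v
      conv_lhs => rw [h0]
      rfl
    ext v
    have h1 := key v
    have h2 := key (rotCLM v)
    have h3 := congrArg (g 0) (rot_sum v)
    simp only [map_add, map_zero] at h3
    simp only [ContinuousLinearMap.zero_apply]
    linarith
  -- second derivative
  set Q := fderiv ℝ g 0 with hQdef
  have hQ : HasFDerivAt g Q 0 := hf2.hasFDerivAt
  have hsymm : ∀ v w, Q v w = Q w v := by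
    intro v w
    refine second_derivative_symmetric_of_eventually (f := f) (f' := g) ?_ hQ v w
    filter_upwards [hf1] with y hy
    exact hy.hasFDerivAt
  -- invariance of Q
  set T := (ContinuousLinearMap.compL ℝ (EuclideanSpace ℝ (Fin 2))
      (EuclideanSpace ℝ (Fin 2)) ℝ).flip rotCLM with hTdef
  have h0r : rotCLM (0 : EuclideanSpace ℝ (Fin 2)) = 0 := map_zero _
  have h1 : HasFDerivAt (fun x => g (rotCLM x)) (Q.comp rotCLM) 0 :=
    HasFDerivAt.comp 0 (h0r.symm ▸ hQ) rotCLM.hasFDerivAt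
  have hTQ : HasFDerivAt (fun x => (g (rotCLM x)).comp rotCLM)
      (T.comp (Q.comp rotCLM)) 0 := T.hasFDerivAt.comp 0 h1
  have hQg : HasFDerivAt g (T.comp (Q.comp rotCLM)) 0 :=
    hTQ.congr_of_eventuallyEq hchain
  have hQeq : Q = T.comp (Q.comp rotCLM) := hQ.unique hQg
  have hQinv : ∀ v w, Q v w = Q (rotCLM v) (rotCLM w) := by
    intro v w
    conv_lhs => rw [hQeq]
    rfl
  -- scalar equations
  have hs3 : Real.sqrt 3 ^ 2 = 3 := Real.sq_sqrt (by norm_num)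
  have hspos : (0:ℝ) < Real.sqrt 3 := Real.sqrt_pos.2 (by norm_num)
  have hB' : Q e2 e1 = Q e1 e2 := hsymm e2 e1
  have E1 := hQinv e1 e1
  rw [rot_e1] at E1
  simp only [map_add, map_smul, ContinuousLinearMap.add_apply,
    ContinuousLinearMap.smul_apply, smul_eq_mul, ContinuousLinearMap.coe_smul',
    Pi.smul_apply] at E1
  have E3 := hQinv e1 e2
  rw [rot_e1, rot_e2] at E3
  simp only [map_add, map_smul, ContinuousLinearMap.add_apply,
    ContinuousLinearMap.smul_apply, smul_eq_mul, ContinuousLinearMap.coe_smul',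
    Pi.smul_apply] at E3
  rw [hB'] at E1 E3
  have hCA : Q e2 e2 = Q e1 e1 := by
    linear_combination (Real.sqrt 3 / 3) * E3 - E1 + ((Q e1 e1 - Q e2 e2) / 12 - Q e2 e2 / 4 - Real.sqrt 3 * Q e1 e2 / 12) * hs3
  have hsB : Real.sqrt 3 * Q e1 e2 = 0 := by
    linear_combination 2 * E1 + (3/2 : ℝ) * hCA + (Q e2 e2 / 2) * hs3
  have hB0 : Q e1 e2 = 0 := by
    rcases mul_eq_zero.1 hsB with h | h
    · exact absurd h hspos.ne'
    · exact h
  -- quadratic form is isotropic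
  have hquad : ∀ x : EuclideanSpace ℝ (Fin 2), Q x x = Q e1 e1 * ‖x‖ ^ 2 := by
    intro x
    conv_lhs => rw [decomp x]
    rw [norm_sq]
    simp only [map_add, map_smul, ContinuousLinearMap.add_apply,
      ContinuousLinearMap.smul_apply, smul_eq_mul, ContinuousLinearMap.coe_smul',
      Pi.smul_apply]
    rw [hB', hB0, hCA]
    ring
  refine ⟨hg0, Q e1 e1 / 2, ?_⟩
  -- derivative of the quadratic part
  have hhalf : ∀ y : EuclideanSpace ℝ (Fin 2),
      HasFDerivAt (fun x : EuclideanSpace ℝ (Fin 2) => (1/2 : ℝ) * Q x x) (Q y) y := by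
    intro y
    have hdiag : HasFDerivAt (fun x : EuclideanSpace ℝ (Fin 2) => (x, x))
        ((ContinuousLinearMap.id ℝ _).prod (ContinuousLinearMap.id ℝ _)) y :=
      (hasFDerivAt_id y).prodMk (hasFDerivAt_id y)
    have hb : HasFDerivAt (fun x : EuclideanSpace ℝ (Fin 2) => Q x x)
        (((Q.isBoundedBilinearMap).deriv (y, y)).comp
          ((ContinuousLinearMap.id ℝ _).prod (ContinuousLinearMap.id ℝ _))) y :=
      HasFDerivAt.comp (f := fun x : EuclideanSpace ℝ (Fin 2) => (x, x)) (x := y)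
        (Q.isBoundedBilinearMap.hasFDerivAt (y, y)) hdiag
    have hb2 := hb.const_mul (1/2 : ℝ)
    refine hb2.congr_fderiv ?_
    ext w
    simp only [ContinuousLinearMap.smul_apply, ContinuousLinearMap.coe_comp',
      Function.comp_apply, ContinuousLinearMap.prod_apply, ContinuousLinearMap.coe_id',
      id_eq, smul_eq_mul]
    rw [Q.isBoundedBilinearMap.deriv_apply]
    simp only [smul_eq_mul]
    rw [hsymm w y]
    ring
  have hψ : ∀ y : EuclideanSpace ℝ (Fin 2), DifferentiableAt ℝ f y →
      HasFDerivAt (fun x => f x - f 0 - (1/2 : ℝ) * Q x x) (g y - Q y) y :=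
    fun y hy => (hy.hasFDerivAt.sub_const (f 0)).sub (hhalf y)
  -- rewrite goal function
  have hcongr : ∀ x : EuclideanSpace ℝ (Fin 2),
      f x - f 0 - Q e1 e1 / 2 * ‖x‖ ^ 2 = f x - f 0 - (1/2 : ℝ) * Q x x := by
    intro x; rw [hquad x]; ring
  simp only [hcongr]
  rw [isLittleO_iff]
  intro ε hε
  have hlo : (fun y => g y - Q y) =o[nhds (0 : EuclideanSpace ℝ (Fin 2))] fun y => y := by
    have := hQ.isLittleO
    simpa [hg0] using this
  have hsmall : ∀ᶠ y in nhds (0 : EuclideanSpace ℝ (Fin 2)), ‖g y - Q y‖ ≤ ε * ‖y‖ := by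
    have := (isLittleO_iff.1 hlo) hε
    simpa using this
  obtain ⟨δ, hδpos, hball⟩ := Metric.eventually_nhds_iff_ball.1 (hf1.and hsmall)
  filter_upwards [Metric.ball_mem_nhds (0 : EuclideanSpace ℝ (Fin 2)) hδpos] with x hx
  have hseg : ∀ y ∈ segment ℝ (0 : EuclideanSpace ℝ (Fin 2)) x,
      y ∈ Metric.ball (0 : EuclideanSpace ℝ (Fin 2)) δ ∧ ‖y‖ ≤ ‖x‖ := by
    intro y hy
    obtain ⟨a, b, ha, hb, hab, rfl⟩ := hy
    have hb1 : b ≤ 1 := by linarith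
    have hn : ‖a • (0 : EuclideanSpace ℝ (Fin 2)) + b • x‖ = b * ‖x‖ := by
      simp [norm_smul, Real.norm_of_nonneg hb]
    have hle : b * ‖x‖ ≤ ‖x‖ := by
      calc b * ‖x‖ ≤ 1 * ‖x‖ := mul_le_mul_of_nonneg_right hb1 (norm_nonneg x)
        _ = ‖x‖ := one_mul _
    refine ⟨?_, by rw [hn]; exact hle⟩
    rw [Metric.mem_ball, dist_zero_right, hn]
    exact lt_of_le_of_lt hle (by simpa [dist_zero_right] using hx)
  have key := Convex.norm_image_sub_le_of_norm_hasFDerivWithin_le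
    (f := fun x => f x - f 0 - (1/2 : ℝ) * Q x x) (f' := fun y => g y - Q y)
    (C := ε * ‖x‖) (s := segment ℝ (0 : EuclideanSpace ℝ (Fin 2)) x)
    (fun y hy => (hψ y (hball _ (hseg y hy).1).1).hasFDerivWithinAt)
    (fun y hy => le_trans (hball _ (hseg y hy).1).2
      (mul_le_mul_of_nonneg_left (hseg y hy).2 hε.le))
    (convex_segment _ _) (left_mem_segment _ _ _) (right_mem_segment _ _ _)
  have key' : ‖(f x - f 0 - (1/2 : ℝ) * Q x x) - (f 0 - f 0 - (1/2 : ℝ) * Q 0 0)‖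
      ≤ ε * ‖x‖ * ‖x - 0‖ := key
  have hψ0 : f 0 - f 0 - (1/2 : ℝ) * Q 0 0 = 0 := by simp
  rw [hψ0, sub_zero, sub_zero] at key'
  calc ‖f x - f 0 - (1/2 : ℝ) * Q x x‖ ≤ ε * ‖x‖ * ‖x‖ := key'
    _ = ε * ‖x‖ ^ 2 := by ring
    _ = ε * ‖‖x‖ ^ 2‖ := by rw [Real.norm_of_nonneg (by positivity)]
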